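/- Let A and B be associative rings with identity, f : A → B a ring homomorphism, and J a proper two-sided ideal of B. Assume the ideal f⁻¹(J) of A is semicommutative, i.e., for all a, b ∈ f⁻¹(J), ab = 0 implies a·f⁻¹(J)·b = 0. If the subring f(A)+J of B is a weak Armendariz ring, then the amalgamation A⋈fJ is a weak Armendariz ring. -/

import Mathlib

open Polynomial

/-- A ring `R` is Armendariz if whenever `p * q = 0` for polynomials over `R`,
every product of a coefficient of `p` with a coefficient of `q` is zero. -/
def IsArmendariz (R : Type*) [Ring R] : Prop :=
  ∀ p q : R[X], p * q = 0 → ∀ i j : ℕ, p.coeff i * q.coeff j = 0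

/-- A ring `R` is nil-Armendariz if whenever every coefficient of `p * q` is nilpotent,
every product of a coefficient of `p` with a coefficient of `q` is nilpotent. -/
def IsNilArmendariz (R : Type*) [Ring R] : Prop :=
  ∀ p q : R[X], (∀ k : ℕ, IsNilpotent ((p * q).coeff k)) →
    ∀ i j : ℕ, IsNilpotent (p.coeff i * q.coeff j)

/-- A ring `R` is weak Armendariz if whenever `p * q = 0` for polynomials over `R`,
every product of a coefficient of `p` with a coefficient of `q` is nilpotent. -/
def IsWeakArmendariz (R : Type*) [Ring R] : Prop :=
  ∀ p q : R[X], p * q = 0 → ∀ i j : ℕ, IsNilpotent (p.coeff i * q.coeff j)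

/-- The amalgamation `A ⋈^f J = {(a, f a + j) | a ∈ A, j ∈ J}` of `A` and `B` along the
two-sided ideal `J` with respect to `f`, as a subring of `A × B`.  (A pair `(a, b)` has the
form `(a, f a + j)` with `j ∈ J` iff `b - f a ∈ J`.) -/
def amalgamation {A B : Type*} [Ring A] [Ring B] (f : A →+* B) (J : TwoSidedIdeal B) :
    Subring (A × B) where
  carrier := {p | p.2 - f p.1 ∈ J}
  zero_mem' := by simp [J.zero_mem]
  one_mem' := by simp [J.zero_mem]
  add_mem' := by
    intro x y hx hy
    have e : (x + y).2 - f ((x + y).1) = (x.2 - f x.1) + (y.2 - f y.1) := by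
      simp only [Prod.snd_add, Prod.fst_add, map_add]; abel
    show (x + y).2 - f ((x + y).1) ∈ J
    rw [e]; exact J.add_mem hx hy
  neg_mem' := by
    intro x hx
    have e : (-x).2 - f ((-x).1) = -(x.2 - f x.1) := by
      simp only [Prod.snd_neg, Prod.fst_neg, map_neg]; abel
    show (-x).2 - f ((-x).1) ∈ J
    rw [e]; exact J.neg_mem hx
  mul_mem' := by
    intro x y hx hy
    have e : (x * y).2 - f ((x * y).1) = x.2 * (y.2 - f y.1) + (x.2 - f x.1) * f y.1 := by
      simp only [Prod.snd_mul, Prod.fst_mul, map_mul, mul_sub, sub_mul]; abel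
    show (x * y).2 - f ((x * y).1) ∈ J
    rw [e]; exact J.add_mem (J.mul_mem_left _ _ hy) (J.mul_mem_right _ _ hx)

/-- The subring `f(A) + J = {f a + j | a ∈ A, j ∈ J}` of `B`.  (An element `b` has the form
`f a + j` with `j ∈ J` iff `b - f a ∈ J` for some `a`.) -/
def imageAddIdeal {A B : Type*} [Ring A] [Ring B] (f : A →+* B) (J : TwoSidedIdeal B) :
    Subring B where
  carrier := {b | ∃ a : A, b - f a ∈ J}
  zero_mem' := ⟨0, by simp [J.zero_mem]⟩
  one_mem' := ⟨1, by simp [J.zero_mem]⟩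
  add_mem' := by
    rintro x y ⟨a, ha⟩ ⟨b, hb⟩
    refine ⟨a + b, ?_⟩
    have e : x + y - f (a + b) = (x - f a) + (y - f b) := by
      rw [map_add]; abel
    rw [e]; exact J.add_mem ha hb
  neg_mem' := by
    rintro x ⟨a, ha⟩
    refine ⟨-a, ?_⟩
    have e : -x - f (-a) = -(x - f a) := by rw [map_neg]; abel
    rw [e]; exact J.neg_mem ha
  mul_mem' := by
    rintro x y ⟨a, ha⟩ ⟨b, hb⟩
    refine ⟨a * b, ?_⟩
    have e : x * y - f (a * b) = x * (y - f b) + (x - f a) * f b := by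
      rw [map_mul, mul_sub, sub_mul]; abel
    rw [e]; exact J.add_mem (J.mul_mem_left _ _ hb) (J.mul_mem_right _ _ ha)

structure SCIdeal (R : Type*) [Ring R] where
  I : R → Prop
  zero : I 0
  add : ∀ {a b : R}, I a → I b → I (a + b)
  neg : ∀ {a : R}, I a → I (-a)
  mulL : ∀ (r : R) {a : R}, I a → I (r * a)
  mulR : ∀ {a : R} (r : R), I a → I (a * r)
  sc : ∀ {a b : R}, I a → I b → a * b = 0 → ∀ {c : R}, I c → a * c * b = 0

namespace SCIdeal

variable {R : Type*} [Ring R] (D : SCIdeal R)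

lemma pow_mem {a : R} (ha : D.I a) : ∀ {n : ℕ}, 1 ≤ n → D.I (a ^ n) := by
  intro n hn
  induction n with
  | zero => omega
  | succ m ih =>
    rcases Nat.eq_or_lt_of_le hn with h | h
    · rw [← h, pow_one]; exact ha
    · rw [pow_succ]; exact D.mulR a (ih (by omega))

lemma shift (a b : R) : ∀ n : ℕ, (a * b) ^ n * a = a * (b * a) ^ n := by
  intro n
  induction n with
  | zero => simp
  | succ m ih =>
    calc (a * b) ^ (m + 1) * a = (a * b) ^ m * (a * (b * a)) := by
          rw [pow_succ, mul_assoc, mul_assoc]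
      _ = ((a * b) ^ m * a) * (b * a) := by rw [mul_assoc]
      _ = a * ((b * a) ^ m * (b * a)) := by rw [ih, mul_assoc]
      _ = a * (b * a) ^ (m + 1) := by rw [← pow_succ]

/-- key word-killing step -/
lemma key1 {u θ : R} (hu : D.I u) (hθ : D.I θ) {m : ℕ} (hum : u ^ m = 0) :
    ∀ i : ℕ, i + 1 ≤ m → (u * θ) ^ i * u ^ (m - i) = 0 := by
  intro i
  induction i with
  | zero => intro _; simpa using hum
  | succ n ih =>
    intro h
    have h1 : (u * θ) ^ n * u ^ (m - n) = 0 := ih (by omega)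
    have h2 : m - n = (m - (n + 1)) + 1 := by omega
    rw [h2, pow_succ', ← mul_assoc] at h1
    have hgoal : m - (n + 1) = m - (n + 1) := rfl
    by_cases h3 : m - (n + 1) = 0
    · rw [h3, pow_zero, mul_one] at h1 ⊢
      rw [pow_succ, ← mul_assoc, h1, zero_mul]
    · have h4 : 1 ≤ m - (n + 1) := by omega
      have hx : D.I ((u * θ) ^ n * u) := D.mulL _ hu
      have hy : D.I (u ^ (m - (n + 1))) := D.pow_mem hu h4
      have h5 := D.sc hx hy h1 hθ
      rw [pow_succ]
      calc (u * θ) ^ n * (u * θ) * u ^ (m - (n + 1))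
          = (u * θ) ^ n * u * θ * u ^ (m - (n + 1)) := by
            rw [mul_assoc ((u * θ) ^ n) u θ]
        _ = 0 := h5

lemma isNilpotent_exists_pos {x : R} (h : IsNilpotent x) : ∃ m : ℕ, 1 ≤ m ∧ x ^ m = 0 := by
  obtain ⟨n, hn⟩ := h
  exact ⟨n + 1, by omega, by rw [pow_succ, hn, zero_mul]⟩

lemma nil_mulL {u θ : R} (hu : D.I u) (hθ : D.I θ) (hnu : IsNilpotent u) :
    IsNilpotent (θ * u) := by
  obtain ⟨m, hm, hum⟩ := isNilpotent_exists_pos hnu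
  have hk : (u * θ) ^ (m - 1) * u = 0 := by
    have := D.key1 hu hθ hum (m - 1) (by omega)
    simpa [show m - (m - 1) = 1 by omega] using this
  refine ⟨m, ?_⟩
  have hm' : m = (m - 1) + 1 := by omega
  rw [hm', pow_succ, ← mul_assoc]
  calc (θ * u) ^ (m - 1) * θ * u = θ * ((u * θ) ^ (m - 1) * u) := by
        rw [shift, mul_assoc]
    _ = 0 := by rw [hk, mul_zero]

lemma nil_mulR {u θ : R} (hu : D.I u) (hθ : D.I θ) (hnu : IsNilpotent u) :
    IsNilpotent (u * θ) := by
  obtain ⟨m, hm, hum⟩ := isNilpotent_exists_pos hnu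
  have hk : (u * θ) ^ (m - 1) * u = 0 := by
    have := D.key1 hu hθ hum (m - 1) (by omega)
    simpa [show m - (m - 1) = 1 by omega] using this
  refine ⟨m, ?_⟩
  have hm' : m = (m - 1) + 1 := by omega
  rw [hm', pow_succ, ← mul_assoc, hk, zero_mul]

lemma nil_swap {x y : R} (h : IsNilpotent (x * y)) : IsNilpotent (y * x) := by
  obtain ⟨n, hn⟩ := h
  refine ⟨n + 1, ?_⟩
  rw [pow_succ, ← mul_assoc, shift, hn, mul_zero, zero_mul]

end SCIdeal

namespace SCIdeal

variable {R : Type*} [Ring R] (D : SCIdeal R)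

/-- product of a word in two letters -/
def wprod (u v : R) : List Bool → R
  | [] => 1
  | b :: t => (if b then u else v) * wprod u v t

lemma tailB {u v : R} (hu : D.I u) (hv : D.I v) :
    ∀ (l : List Bool) {Y : R}, D.I Y → ∀ {j : ℕ}, Y * u ^ j = 0 →
      j ≤ l.count true → Y * wprod u v l = 0 := by
  intro l
  induction l with
  | nil =>
    intro Y _ j hYu hj
    have : j = 0 := by simpa using hj
    subst this
    simpa [wprod] using hYu
  | cons b t ih =>
    intro Y hY j hYu hj
    rcases Nat.eq_zero_or_pos j with rfl | hjpos
    · have hY0 : Y = 0 := by simpa using hYu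
      rw [hY0, zero_mul]
    cases b with
    | true =>
      have hj' : j - 1 ≤ t.count true := by
        simp [List.count_cons] at hj; omega
      have hYu' : (Y * u) * u ^ (j - 1) = 0 := by
        rw [mul_assoc, ← pow_succ']
        have : j - 1 + 1 = j := by omega
        rw [this]; exact hYu
      have := ih (D.mulR u hY) hYu' hj'
      simpa [wprod, mul_assoc] using this
    | false =>
      have hj' : j ≤ t.count true := by
        simp [List.count_cons] at hj; omega
      have hYv : (Y * v) * u ^ j = 0 := D.sc hY (D.pow_mem hu hjpos) hYu hv
      have := ih (D.mulR v hY) hYv hj'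
      simpa [wprod, mul_assoc] using this

lemma coreB {u v : R} (hu : D.I u) (hv : D.I v) {m : ℕ} (hm : 1 ≤ m) (hum : u ^ m = 0) :
    ∀ l : List Bool, m ≤ l.count true → wprod u v l = 0 := by
  intro l
  induction l with
  | nil => intro h; simp at h; omega
  | cons b t ih =>
    intro h
    cases b with
    | true =>
      have hj : m - 1 ≤ t.count true := by
        simp [List.count_cons] at h; omega
      have hYu : u * u ^ (m - 1) = 0 := by
        rw [← pow_succ']
        have : m - 1 + 1 = m := by omega
        rw [this]; exact hum
      have := D.tailB hu hv t hu hYu hj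
      simpa [wprod] using this
    | false =>
      have hj : m ≤ t.count true := by
        simp [List.count_cons] at h; omega
      simp [wprod, ih hj]

lemma wprod_map_not (u v : R) : ∀ l : List Bool, wprod u v (l.map not) = wprod v u l := by
  intro l
  induction l with
  | nil => rfl
  | cons b t ih => cases b <;> simp [wprod, ih]

lemma count_true_map_not : ∀ l : List Bool, (l.map not).count true = l.count false := by
  intro l
  induction l with
  | nil => rfl
  | cons b t ih => cases b <;> simp [List.count_cons, ih]

lemma count_true_add_count_false : ∀ l : List Bool, l.count true + l.count false = l.length := by
  intro l
  induction l with
  | nil => rfl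
  | cons b t ih => cases b <;> simp [List.count_cons] <;> omega

lemma pow_add_mem_closure (u v : R) :
    ∀ L : ℕ, (u + v) ^ L ∈
      AddSubgroup.closure {x : R | ∃ l : List Bool, l.length = L ∧ wprod u v l = x} := by
  intro L
  induction L with
  | zero =>
    apply AddSubgroup.subset_closure
    exact ⟨[], rfl, by simp [wprod]⟩
  | succ L ih =>
    rw [pow_succ']
    revert ih
    generalize hG : {x : R | ∃ l : List Bool, l.length = L ∧ wprod u v l = x} = G
    intro ih
    have key : ∀ x ∈ AddSubgroup.closure G, (u + v) * x ∈
        AddSubgroup.closure {x : R | ∃ l : List Bool, l.length = L + 1 ∧ wprod u v l = x} := by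
      intro x hx
      induction hx using AddSubgroup.closure_induction with
      | mem y hy =>
        obtain ⟨l, hl, rfl⟩ := by rw [← hG] at hy; exact hy
        rw [add_mul]
        apply AddSubgroup.add_mem
        · exact AddSubgroup.subset_closure ⟨true :: l, by simp [hl], by simp [wprod]⟩
        · exact AddSubgroup.subset_closure ⟨false :: l, by simp [hl], by simp [wprod]⟩
      | zero => rw [mul_zero]; exact AddSubgroup.zero_mem _
      | add a b _ _ ha hb => rw [mul_add]; exact AddSubgroup.add_mem _ ha hb
      | neg a _ ha => rw [mul_neg]; exact AddSubgroup.neg_mem _ ha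
    exact key _ ih

lemma nil_add {u v : R} (hu : D.I u) (hv : D.I v)
    (hnu : IsNilpotent u) (hnv : IsNilpotent v) : IsNilpotent (u + v) := by
  obtain ⟨m, hm, hum⟩ := isNilpotent_exists_pos hnu
  obtain ⟨n, hn, hvn⟩ := isNilpotent_exists_pos hnv
  refine ⟨m + n, ?_⟩
  have hmem := pow_add_mem_closure u v (m + n)
  have hsub : {x : R | ∃ l : List Bool, l.length = m + n ∧ wprod u v l = x} ⊆
      ((⊥ : AddSubgroup R) : Set R) := by
    rintro x ⟨l, hl, rfl⟩
    have hcount := count_true_add_count_false l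
    rw [hl] at hcount
    have : m ≤ l.count true ∨ n ≤ l.count false := by omega
    rcases this with h | h
    · simpa using D.coreB hu hv hm hum l h
    · have h' : n ≤ (l.map not).count true := by rw [count_true_map_not]; exact h
      have := D.coreB hv hu hn hvn (l.map not) h'
      rw [wprod_map_not] at this
      simpa using this
  have := (AddSubgroup.closure_le ⊥).mpr hsub hmem
  simpa using this

end SCIdeal

namespace SCIdeal

open Polynomial

variable {R : Type*} [Ring R] (D : SCIdeal R)

/-- an element of the ideal which is nilpotent -/
def NN (x : R) : Prop := D.I x ∧ IsNilpotent x

lemma NN_zero : D.NN 0 := ⟨D.zero, ⟨1, by simp⟩⟩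

lemma NN_add {a b : R} (ha : D.NN a) (hb : D.NN b) : D.NN (a + b) :=
  ⟨D.add ha.1 hb.1, D.nil_add ha.1 hb.1 ha.2 hb.2⟩

lemma NN_neg {a : R} (ha : D.NN a) : D.NN (-a) := ⟨D.neg ha.1, ha.2.neg⟩

lemma NN_mulL (r : R) (hr : D.I r) {a : R} (ha : D.NN a) : D.NN (r * a) :=
  ⟨D.mulL r ha.1, D.nil_mulL ha.1 hr ha.2⟩

lemma NN_mulR {a : R} (ha : D.NN a) (r : R) (hr : D.I r) : D.NN (a * r) :=
  ⟨D.mulR r ha.1, D.nil_mulR ha.1 hr ha.2⟩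

lemma NN_swap {x y : R} (hx : D.I x) (hy : D.I y) (h : D.NN (x * y)) : D.NN (y * x) :=
  ⟨D.mulR x hy, nil_swap h.2⟩

/-- Relative weak Armendariz property: if all coefficients of `p` and `q` lie in the
semicommutative ideal and `p * q = 0`, then products of coefficients are nilpotent. -/
lemma rel_wa (p q : R[X]) (hp : ∀ i, D.I (p.coeff i)) (hq : ∀ j, D.I (q.coeff j))
    (hpq : p * q = 0) : ∀ i j : ℕ, D.NN (p.coeff i * q.coeff j) := by
  have hconv : ∀ k : ℕ, ∑ x ∈ Finset.HasAntidiagonal.antidiagonal k, p.coeff x.1 * q.coeff x.2 = 0 := by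
    intro k
    rw [← Polynomial.coeff_mul, hpq, Polynomial.coeff_zero]
  have main : ∀ k : ℕ, ∀ i j : ℕ, i + j = k → D.NN (p.coeff i * q.coeff j) := by
    intro k
    induction k using Nat.strong_induction_on with
    | _ k ihk =>
      intro i
      induction i using Nat.strong_induction_on with
      | _ i ihi =>
        intro j hij
        have hsum : ∑ x ∈ Finset.HasAntidiagonal.antidiagonal k,
            (p.coeff x.1 * q.coeff x.2) * p.coeff i = 0 := by
          rw [← Finset.sum_mul, hconv k, zero_mul]
        have hmem : (i, j) ∈ Finset.HasAntidiagonal.antidiagonal k := by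
          rw [Finset.HasAntidiagonal.mem_antidiagonal]; exact hij
        have hsplit : (p.coeff i * q.coeff j) * p.coeff i =
            -∑ x ∈ (Finset.HasAntidiagonal.antidiagonal k).erase (i, j),
              (p.coeff x.1 * q.coeff x.2) * p.coeff i := by
          have h := Finset.add_sum_erase _ (fun x : ℕ × ℕ =>
            (p.coeff x.1 * q.coeff x.2) * p.coeff i) hmem
          rw [hsum] at h
          exact eq_neg_of_add_eq_zero_left h
        have hterm : ∀ x ∈ (Finset.HasAntidiagonal.antidiagonal k).erase (i, j),
            D.NN ((p.coeff x.1 * q.coeff x.2) * p.coeff i) := by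
          rintro ⟨a, b⟩ hx
          have hne : (a, b) ≠ (i, j) := (Finset.mem_erase.mp hx).1
          have hab : a + b = k := Finset.HasAntidiagonal.mem_antidiagonal.mp (Finset.mem_erase.mp hx).2
          rcases lt_trichotomy a i with hlt | heq | hgt
          · exact D.NN_mulR (ihi a hlt b hab) _ (hp i)
          · exfalso; apply hne; subst heq
            have : b = j := by omega
            rw [this]
          · have hk : i + b < k := by omega
            have h1 : D.NN (p.coeff i * q.coeff b) := ihk (i + b) hk i b rfl
            have h2 : D.NN (q.coeff b * p.coeff i) := D.NN_swap (hp i) (hq b) h1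
            have h3 : D.NN (p.coeff a * (q.coeff b * p.coeff i)) :=
              D.NN_mulL _ (hp a) h2
            rwa [← mul_assoc] at h3
        have hT : D.NN ((p.coeff i * q.coeff j) * p.coeff i) := by
          rw [hsplit]
          apply D.NN_neg
          exact Finset.sum_induction _ _ (fun a b ha hb => D.NN_add ha hb) D.NN_zero hterm
        have hsq : D.NN ((p.coeff i * q.coeff j) * (p.coeff i * q.coeff j)) := by
          have := D.NN_mulR hT _ (hq j)
          rwa [mul_assoc] at this
        refine ⟨D.mulR _ (hp i), ?_⟩
        obtain ⟨n, hn⟩ := hsq.2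
        refine ⟨2 * n, ?_⟩
        rw [pow_mul, pow_two]
        exact hn
  intro i j
  exact main (i + j) i j rfl

end SCIdeal

theorem stmt_19 {A B : Type*} [Ring A] [Ring B] (f : A →+* B) (J : TwoSidedIdeal B)
    (hJ : (1 : B) ∉ J)
    (hsc : ∀ a b : A, f a ∈ J → f b ∈ J → a * b = 0 → ∀ c : A, f c ∈ J → a * c * b = 0)
    (hB : IsWeakArmendariz (imageAddIdeal f J)) :
    IsWeakArmendariz (amalgamation f J) := by
  intro P Q hPQ i j
  -- the semicommutative ideal f⁻¹(J) of A
  let D : SCIdeal A :=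
    { I := fun a => f a ∈ J
      zero := by simpa using J.zero_mem
      add := fun {a b} ha hb => by simpa [map_add] using J.add_mem ha hb
      neg := fun {a} ha => by simpa [map_neg] using J.neg_mem ha
      mulL := fun r {a} ha => by
        have := J.mul_mem_left (f r) (f a) ha
        simpa [map_mul] using this
      mulR := fun {a} r ha => by
        have := J.mul_mem_right (f a) (f r) ha
        simpa [map_mul] using this
      sc := fun {a b} ha hb hab {c} hc => hsc a b ha hb hab c hc }
  -- projections
  let π : (amalgamation f J) →+* A := (RingHom.fst A B).comp (amalgamation f J).subtype
  let ψ : (amalgamation f J) →+* (imageAddIdeal f J) :=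
    RingHom.codRestrict ((RingHom.snd A B).comp (amalgamation f J).subtype)
      (imageAddIdeal f J) (fun x => ⟨(x : A × B).1, x.2⟩)
  set z := P.coeff i * Q.coeff j with hz
  -- second coordinate is nilpotent
  have h2 : (P.map ψ) * (Q.map ψ) = 0 := by
    rw [← Polynomial.map_mul, hPQ, Polynomial.map_zero]
  have hnil2 := hB _ _ h2 i j
  rw [Polynomial.coeff_map, Polynomial.coeff_map] at hnil2
  have hb : IsNilpotent ((z : A × B).2) := by
    have h := hnil2.map (imageAddIdeal f J).subtype
    exact h
  -- first coordinate
  have hpq1 : (P.map π) * (Q.map π) = 0 := by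
    rw [← Polynomial.map_mul, hPQ, Polynomial.map_zero]
  set x := (z : A × B).1 with hx
  have hx_eq : x = (P.map π).coeff i * (Q.map π).coeff j := by
    rw [Polynomial.coeff_map, Polynomial.coeff_map]
    rfl
  have hzJ : (z : A × B).2 - f ((z : A × B).1) ∈ J := z.2
  -- get a power of x in f⁻¹(J)
  obtain ⟨N0, hN0⟩ := hb
  have hbN : ((z : A × B).2) ^ (N0 + 1) = 0 := by rw [pow_succ, hN0, zero_mul]
  have hdiff : ∀ k : ℕ, (f x) ^ k - ((z : A × B).2) ^ k ∈ J := by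
    intro k
    induction k with
    | zero => simpa using J.zero_mem
    | succ m ih =>
      have e : (f x) ^ (m + 1) - ((z : A × B).2) ^ (m + 1) =
          (f x) ^ m * (f x - (z : A × B).2) +
            ((f x) ^ m - ((z : A × B).2) ^ m) * (z : A × B).2 := by
        rw [pow_succ, pow_succ]; noncomm_ring
      rw [e]
      refine J.add_mem (J.mul_mem_left _ _ ?_) (J.mul_mem_right _ _ ih)
      have := J.neg_mem hzJ
      simpa using this
  have hθJ : f (x ^ (N0 + 1)) ∈ J := by
    rw [map_pow]
    have := hdiff (N0 + 1)
    rw [hbN, sub_zero] at this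
    exact this
  -- apply the relative weak Armendariz lemma
  have hp' : ∀ n : ℕ, D.I ((Polynomial.C (x ^ (N0 + 1)) * (P.map π)).coeff n) := by
    intro n
    rw [Polynomial.coeff_C_mul]
    exact D.mulR _ hθJ
  have hq' : ∀ n : ℕ, D.I (((Q.map π) * Polynomial.C (x ^ (N0 + 1))).coeff n) := by
    intro n
    rw [Polynomial.coeff_mul_C]
    exact D.mulL _ hθJ
  have hpq' : (Polynomial.C (x ^ (N0 + 1)) * (P.map π)) *
      ((Q.map π) * Polynomial.C (x ^ (N0 + 1))) = 0 := by
    rw [mul_assoc, ← mul_assoc (P.map π), hpq1, zero_mul, mul_zero]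
  have hmain := D.rel_wa _ _ hp' hq' hpq' i j
  have hval : (Polynomial.C (x ^ (N0 + 1)) * (P.map π)).coeff i *
      ((Q.map π) * Polynomial.C (x ^ (N0 + 1))).coeff j = x ^ ((N0 + 1) + 1 + (N0 + 1)) := by
    rw [Polynomial.coeff_C_mul, Polynomial.coeff_mul_C]
    calc x ^ (N0 + 1) * (P.map π).coeff i * ((Q.map π).coeff j * x ^ (N0 + 1))
        = x ^ (N0 + 1) * ((P.map π).coeff i * (Q.map π).coeff j) * x ^ (N0 + 1) := by
          noncomm_ring
      _ = x ^ (N0 + 1) * x * x ^ (N0 + 1) := by rw [← hx_eq]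
      _ = x ^ ((N0 + 1) + 1 + (N0 + 1)) := by rw [← pow_succ, ← pow_add]
  rw [hval] at hmain
  have hxnil : IsNilpotent x := by
    obtain ⟨n, hn⟩ := hmain.2
    refine ⟨((N0 + 1) + 1 + (N0 + 1)) * n, ?_⟩
    rw [pow_mul]
    exact hn
  -- combine
  obtain ⟨m1, hm1⟩ := hxnil
  refine ⟨m1 + (N0 + 1), ?_⟩
  have hfinal : ((z ^ (m1 + (N0 + 1)) : (amalgamation f J)) : A × B) = 0 := by
    push_cast
    rw [Prod.ext_iff]
    constructor
    · show ((z : A × B) ^ (m1 + (N0 + 1))).1 = 0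
      rw [Prod.pow_fst, pow_add, ← hx, hm1, zero_mul]
    · show ((z : A × B) ^ (m1 + (N0 + 1))).2 = 0
      rw [Prod.pow_snd, pow_add, hbN, mul_zero]
  exact Subtype.ext hfinal
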